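/- Let Ω ⊂ ℝ^d be bounded open with Poincaré constant C_P (i.e., ‖φ‖_{L²(Ω)} ≤ C_P ‖∇φ‖_{L²(Ω)} for φ ∈ H¹₀(Ω)), let L > 0, κ, κ̄ > 0, and let B₁, B₂ ⊂ Ω have positive finite measure. Define a(φ,θ;ψ,δ) = ∫_Ω κ ∇φ·∇ψ dV + ∫₀^L κ̄ θ'δ' dx on V = H¹₀(Ω) × H¹(0,L). Then a is elliptic on ker B: there exists ᾱ > 0 such that a(φ,θ;φ,θ) ≥ ᾱ (‖φ‖²_{H¹(Ω)} + ‖θ‖²_{H¹(0,L)}) for all (φ,θ) with (1/|B₁|)∫_{B₁}φ = θ(0) and (1/|B₂|)∫_{B₂}φ = θ(L). -/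

import Mathlib

open MeasureTheory

/-- Cauchy–Schwarz via the variance trick. -/
lemma sq_integral_le_measure_mul_integral_sq {α : Type*} [MeasurableSpace α]
    (μ : Measure α) [IsFiniteMeasure μ] (f : α → ℝ)
    (hf : Integrable f μ) (hf2 : Integrable (fun x => f x ^ 2) μ) :
    (∫ x, f x ∂μ) ^ 2 ≤ (μ Set.univ).toReal * ∫ x, f x ^ 2 ∂μ := by
  set m : ℝ := (μ Set.univ).toReal with hm
  set I : ℝ := ∫ x, f x ∂μ with hI
  have hmnn : 0 ≤ m := ENNReal.toReal_nonneg
  have h0 : 0 ≤ ∫ x, (m * f x - I) ^ 2 ∂μ := integral_nonneg fun x => sq_nonneg _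
  have hA : Integrable (fun x => m ^ 2 * f x ^ 2 - 2 * m * I * f x) μ := by
    have := (hf2.const_mul (m ^ 2)).sub (hf.const_mul (2 * m * I))
    simpa [Pi.sub_def] using this
  have hexp : ∫ x, (m * f x - I) ^ 2 ∂μ
      = m ^ 2 * (∫ x, f x ^ 2 ∂μ) - 2 * m * I * I + I ^ 2 * m := by
    have h1 : ∀ x, (m * f x - I) ^ 2 = m ^ 2 * f x ^ 2 - 2 * m * I * f x + I ^ 2 := by
      intro x; ring
    simp_rw [h1]
    rw [integral_add hA (integrable_const _)]
    have h2 : ∫ x, (m ^ 2 * f x ^ 2 - 2 * m * I * f x) ∂μ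
        = m ^ 2 * (∫ x, f x ^ 2 ∂μ) - 2 * m * I * I := by
      rw [integral_sub (hf2.const_mul _) (hf.const_mul _), integral_const_mul,
        integral_const_mul]
    rw [h2, integral_const, smul_eq_mul, measureReal_def, ← hm]
    ring
  rcases eq_or_lt_of_le hmnn with hm0 | hmpos
  · have hμ : μ = 0 := by
      have huniv : μ Set.univ = 0 := by
        rcases (ENNReal.toReal_eq_zero_iff _).1 hm0.symm with h | h
        · exact h
        · exact absurd h (measure_ne_top μ _)
      exact Measure.measure_univ_eq_zero.1 huniv
    simp [hI, hμ]
  · have key : m * I ^ 2 ≤ m ^ 2 * ∫ x, f x ^ 2 ∂μ := by nlinarith [h0, hexp]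
    nlinarith [key, hmpos]

set_option maxHeartbeats 1000000 in
/-- Ellipticity of a(φ,θ;φ,θ) = ∫_Ω κ|∇φ|² + ∫₀^L κ̄|θ'|² on the kernel of the
constraint operator B (pairs whose region averages match the wire endpoint
values): a(φ,θ;φ,θ) ≥ ᾱ(‖φ‖²_{H¹(Ω)} + ‖θ‖²_{H¹(0,L)}). -/
theorem ellipticity_on_kernel (d : ℕ) (Ω B₁ B₂ : Set (EuclideanSpace ℝ (Fin d)))
    (hΩo : IsOpen Ω) (hΩb : Bornology.IsBounded Ω)
    (hB₁Ω : B₁ ⊆ Ω) (hB₂Ω : B₂ ⊆ Ω)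
    (hB₁m : MeasurableSet B₁) (hB₂m : MeasurableSet B₂)
    (hB₁0 : 0 < volume B₁) (hB₂0 : 0 < volume B₂)
    (hB₁f : volume B₁ < ⊤) (hB₂f : volume B₂ < ⊤)
    (L κ κb CP : ℝ) (hL : 0 < L) (hκ : 0 < κ) (hκb : 0 < κb) (hCP : 0 < CP) :
    ∃ α : ℝ, 0 < α ∧
      ∀ (φ : EuclideanSpace ℝ (Fin d) → ℝ) (θ θ' : ℝ → ℝ),
        -- φ ∈ H¹₀(Ω), with the Poincaré inequality (constant CP)
        MemLp φ 2 (volume.restrict Ω) →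
        MemLp (fun x => ‖gradient φ x‖) 2 (volume.restrict Ω) →
        Real.sqrt (∫ x in Ω, (φ x) ^ 2) ≤
            CP * Real.sqrt (∫ x in Ω, ‖gradient φ x‖ ^ 2) →
        -- θ ∈ H¹(0,L)
        (∀ x ∈ Set.Icc (0:ℝ) L, HasDerivAt θ (θ' x) x) →
        IntervalIntegrable (fun x => (θ' x) ^ 2) volume 0 L →
        -- (φ,θ) ∈ ker B
        (((volume B₁).toReal)⁻¹ * ∫ x in B₁, φ x) = θ 0 →
        (((volume B₂).toReal)⁻¹ * ∫ x in B₂, φ x) = θ L →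
        κ * (∫ x in Ω, ‖gradient φ x‖ ^ 2) + κb * (∫ x in (0:ℝ)..L, (θ' x) ^ 2) ≥
          α * (((∫ x in Ω, (φ x) ^ 2) + ∫ x in Ω, ‖gradient φ x‖ ^ 2) +
                ((∫ x in (0:ℝ)..L, (θ x) ^ 2) + ∫ x in (0:ℝ)..L, (θ' x) ^ 2)) := by
  set v₁ : ℝ := (volume B₁).toReal with hv₁def
  have hv₁ : 0 < v₁ := ENNReal.toReal_pos hB₁0.ne' hB₁f.ne
  set c₁ : ℝ := 1 + CP ^ 2 + 2 * L * v₁⁻¹ * CP ^ 2 with hc₁def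
  set c₂ : ℝ := 1 + 2 * L ^ 2 with hc₂def
  have hc₁ : 0 < c₁ := by positivity
  have hc₂ : 0 < c₂ := by positivity
  refine ⟨min (κ / c₁) (κb / c₂), lt_min (div_pos hκ hc₁) (div_pos hκb hc₂), ?_⟩
  set α : ℝ := min (κ / c₁) (κb / c₂) with hαdef
  have hα : 0 < α := lt_min (div_pos hκ hc₁) (div_pos hκb hc₂)
  intro φ θ θ' hφ2 hg2 hPoin hθd hθ'2 hk1 _hk2
  set P : ℝ := ∫ x in Ω, (φ x) ^ 2 with hPdef
  set G : ℝ := ∫ x in Ω, ‖gradient φ x‖ ^ 2 with hGdef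
  set T : ℝ := ∫ x in (0:ℝ)..L, (θ x) ^ 2 with hTdef
  set D : ℝ := ∫ x in (0:ℝ)..L, (θ' x) ^ 2 with hDdef
  have hPnn : 0 ≤ P := integral_nonneg fun x => sq_nonneg _
  have hGnn : 0 ≤ G := integral_nonneg fun x => sq_nonneg _
  have hDnn : 0 ≤ D := intervalIntegral.integral_nonneg hL.le fun x _ => sq_nonneg _
  -- Poincaré: P ≤ CP² G
  have hPG : P ≤ CP ^ 2 * G := by
    have h1 : Real.sqrt P * Real.sqrt P ≤ (CP * Real.sqrt G) * (CP * Real.sqrt G) :=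
      mul_self_le_mul_self (Real.sqrt_nonneg _) hPoin
    nlinarith [Real.sq_sqrt hPnn, Real.sq_sqrt hGnn, h1]
  -- Cauchy–Schwarz on B₁
  haveI : IsFiniteMeasure (volume.restrict B₁) :=
    ⟨by rw [Measure.restrict_apply_univ]; exact hB₁f⟩
  have hle : volume.restrict B₁ ≤ volume.restrict Ω := Measure.restrict_mono hB₁Ω le_rfl
  have hφ2B : MemLp φ 2 (volume.restrict B₁) := hφ2.mono_measure hle
  have hCS : (∫ x in B₁, φ x) ^ 2 ≤ v₁ * ∫ x in B₁, (φ x) ^ 2 := by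
    have := sq_integral_le_measure_mul_integral_sq (volume.restrict B₁) φ
      (hφ2B.integrable one_le_two) hφ2B.integrable_sq
    rwa [Measure.restrict_apply_univ] at this
  have hsub : (∫ x in B₁, (φ x) ^ 2) ≤ P :=
    setIntegral_mono_set hφ2.integrable_sq
      (Filter.Eventually.of_forall fun x => sq_nonneg _) hB₁Ω.eventuallyLE
  have hIv : (∫ x in B₁, φ x) = v₁ * θ 0 := by
    rw [← hk1]; field_simp
  have hθ0sq : (θ 0) ^ 2 ≤ v₁⁻¹ * P := by
    have h2 : v₁ ^ 2 * (θ 0) ^ 2 ≤ v₁ * P := by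
      have h3 := hCS
      rw [hIv] at h3
      calc v₁ ^ 2 * (θ 0) ^ 2 = (v₁ * θ 0) ^ 2 := by ring
        _ ≤ v₁ * ∫ x in B₁, (φ x) ^ 2 := h3
        _ ≤ v₁ * P := mul_le_mul_of_nonneg_left hsub hv₁.le
    have h4 : (θ 0) ^ 2 ≤ (v₁ * P) / v₁ ^ 2 := by
      rw [le_div_iff₀ (by positivity : (0:ℝ) < v₁ ^ 2)]
      linarith [h2]
    have h5 : (v₁ * P) / v₁ ^ 2 = v₁⁻¹ * P := by
      field_simp
    rwa [h5] at h4
  -- θ' is interval integrable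
  have hθ'meas : AEStronglyMeasurable θ' (volume.restrict (Set.uIoc 0 L)) := by
    apply (measurable_deriv θ).aestronglyMeasurable.congr
    rw [Set.uIoc_of_le hL.le]
    filter_upwards [ae_restrict_mem measurableSet_Ioc] with t ht
    exact (hθd t (Set.Ioc_subset_Icc_self ht)).deriv
  have hbase : IntervalIntegrable (fun x => 1 + (θ' x) ^ 2) volume 0 L :=
    (intervalIntegrable_const (c := (1:ℝ))).add hθ'2
  have hθ'int : IntervalIntegrable θ' volume 0 L := by
    apply hbase.mono_fun hθ'meas
    apply Filter.Eventually.of_forall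
    intro x
    simp only [Real.norm_eq_abs]
    rw [abs_of_nonneg (show (0:ℝ) ≤ 1 + θ' x ^ 2 by positivity)]
    nlinarith [sq_nonneg (|θ' x| - 1), sq_abs (θ' x), abs_nonneg (θ' x)]
  -- pointwise bound for θ²
  have hpt : ∀ x ∈ Set.Icc (0:ℝ) L, (θ x) ^ 2 ≤ 2 * (θ 0) ^ 2 + 2 * L * D := by
    intro x hx
    have hsubIcc : Set.uIcc (0:ℝ) x ⊆ Set.uIcc (0:ℝ) L := by
      rw [Set.uIcc_of_le hx.1, Set.uIcc_of_le hL.le]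
      exact Set.Icc_subset_Icc le_rfl hx.2
    have hθ'x : IntervalIntegrable θ' volume 0 x := hθ'int.mono_set hsubIcc
    have hθ'2x : IntervalIntegrable (fun t => (θ' t) ^ 2) volume 0 x := hθ'2.mono_set hsubIcc
    have hFTC : (∫ t in (0:ℝ)..x, θ' t) = θ x - θ 0 := by
      apply intervalIntegral.integral_eq_sub_of_hasDerivAt _ hθ'x
      intro t ht
      rw [Set.uIcc_of_le hx.1] at ht
      exact hθd t ⟨ht.1, ht.2.trans hx.2⟩
    haveI : IsFiniteMeasure (volume.restrict (Set.Ioc (0:ℝ) x)) :=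
      ⟨by rw [Measure.restrict_apply_univ]; exact measure_Ioc_lt_top⟩
    have hCSx : (∫ t in (0:ℝ)..x, θ' t) ^ 2 ≤ x * ∫ t in (0:ℝ)..x, (θ' t) ^ 2 := by
      rw [intervalIntegral.integral_of_le hx.1, intervalIntegral.integral_of_le hx.1]
      have := sq_integral_le_measure_mul_integral_sq (volume.restrict (Set.Ioc (0:ℝ) x)) θ'
        hθ'x.1 hθ'2x.1
      rwa [Measure.restrict_apply_univ, Real.volume_Ioc, sub_zero,
        ENNReal.toReal_ofReal hx.1] at this
    have hDx : (∫ t in (0:ℝ)..x, (θ' t) ^ 2) ≤ D :=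
      intervalIntegral.integral_mono_interval le_rfl hx.1 hx.2
        (Filter.Eventually.of_forall fun t => sq_nonneg _) hθ'2
    have hDxnn : 0 ≤ ∫ t in (0:ℝ)..x, (θ' t) ^ 2 :=
      intervalIntegral.integral_nonneg hx.1 fun t _ => sq_nonneg _
    have hxQ : x * (∫ t in (0:ℝ)..x, (θ' t) ^ 2) ≤ L * D :=
      mul_le_mul hx.2 hDx hDxnn hL.le
    rw [hFTC] at hCSx
    nlinarith [hCSx, hxQ, sq_nonneg (θ x - 2 * θ 0)]
  -- integrate the pointwise bound
  have hθc : ContinuousOn θ (Set.uIcc (0:ℝ) L) := fun t ht =>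
    (hθd t (by rwa [Set.uIcc_of_le hL.le] at ht)).continuousAt.continuousWithinAt
  have hTint : IntervalIntegrable (fun x => (θ x) ^ 2) volume 0 L :=
    (hθc.pow 2).intervalIntegrable
  have hT : T ≤ L * (2 * (θ 0) ^ 2 + 2 * L * D) := by
    have h1 : T ≤ ∫ _x in (0:ℝ)..L, (2 * (θ 0) ^ 2 + 2 * L * D) :=
      intervalIntegral.integral_mono_on hL.le hTint (intervalIntegrable_const) hpt
    rwa [intervalIntegral.integral_const, smul_eq_mul, sub_zero] at h1
  -- assemble
  have hsum : (P + G) + (T + D) ≤ c₁ * G + c₂ * D := by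
    have h1 : L * (θ 0) ^ 2 ≤ L * (v₁⁻¹ * P) := mul_le_mul_of_nonneg_left hθ0sq hL.le
    have h2 : L * (v₁⁻¹ * P) ≤ L * (v₁⁻¹ * (CP ^ 2 * G)) := by
      apply mul_le_mul_of_nonneg_left _ hL.le
      exact mul_le_mul_of_nonneg_left hPG (inv_nonneg.2 hv₁.le)
    rw [hc₁def, hc₂def]
    nlinarith [hPG, hT, h1, h2]
  have hα1 : α * c₁ ≤ κ := (le_div_iff₀ hc₁).1 (min_le_left _ _)
  have hα2 : α * c₂ ≤ κb := (le_div_iff₀ hc₂).1 (min_le_right _ _)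
  calc α * ((P + G) + (T + D)) ≤ α * (c₁ * G + c₂ * D) :=
        mul_le_mul_of_nonneg_left hsum hα.le
    _ = (α * c₁) * G + (α * c₂) * D := by ring
    _ ≤ κ * G + κb * D :=
        add_le_add (mul_le_mul_of_nonneg_right hα1 hGnn)
          (mul_le_mul_of_nonneg_right hα2 hDnn)
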